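/- Let σ be a positive integer, c_σ = sinh(πσ^{-1/2})/(πσ^{-1/2}), and define h_1 = c_σ and h_{σn²+1} = 2c_σ(−1)^n/(σn²+1) for n ≥ 1, with h_k = 0 otherwise. Then Σ_{k=1}^∞ |h_k| = cosh(πσ^{-1/2}). -/

import Mathlib

open Real


lemma coshInt (a : ℝ) (ha : 0 < a) (n : ℤ) :
    ∫ x : ℝ in (-π)..π, Complex.exp (-(n : ℂ) * x * Complex.I) * Complex.cosh (a * x)
      = (-1) ^ n * ((2 * a * Real.sinh (a * π) / (a ^ 2 + (n : ℝ) ^ 2) : ℝ) : ℂ) := by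
  set u : ℂ := ↑a - ↑n * Complex.I with hudef
  set v : ℂ := ↑a + ↑n * Complex.I with hvdef
  have hu : u ≠ 0 := by
    intro h
    have := congrArg Complex.re h
    simp [hudef] at this
    exact ha.ne' this
  have hv : v ≠ 0 := by
    intro h
    have := congrArg Complex.re h
    simp [hvdef] at this
    exact ha.ne' this
  have key : ∀ x : ℝ, Complex.exp (-(n : ℂ) * x * Complex.I) * Complex.cosh (a * x)
      = (Complex.exp (u * x) + Complex.exp ((-v) * x)) / 2 := by
    intro x
    rw [Complex.cosh, mul_div_assoc', mul_add, ← Complex.exp_add, ← Complex.exp_add]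
    rw [hudef, hvdef]
    ring_nf
  rw [intervalIntegral.integral_congr (fun x _ => key x)]
  have hint : ∀ c : ℂ, c ≠ 0 → ∫ x : ℝ in (-π)..π, Complex.exp (c * x)
      = (Complex.exp (c * π) - Complex.exp (c * (-π))) / c := by
    intro c hc
    have := integral_exp_mul_complex (b := π) (a := -π) hc
    push_cast at this ⊢
    exact this
  have int1 : IntervalIntegrable (fun x : ℝ => Complex.exp (u * x))
      MeasureTheory.volume (-π) π := (Complex.continuous_exp.comp (by fun_prop)).intervalIntegrable _ _
  have int2 : IntervalIntegrable (fun x : ℝ => Complex.exp ((-v) * x))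
      MeasureTheory.volume (-π) π := (Complex.continuous_exp.comp (by fun_prop)).intervalIntegrable _ _
  rw [intervalIntegral.integral_div, intervalIntegral.integral_add int1 int2,
    hint u hu, hint (-v) (neg_ne_zero.2 hv)]
  -- now replace the exponentials
  set w : ℂ := (-1) ^ n with hwdef
  have hexpn : Complex.exp ((n : ℂ) * (π * Complex.I)) = w := by
    rw [Complex.exp_int_mul, Complex.exp_pi_mul_I]
  have hw2 : w * w = 1 := by
    rw [hwdef, ← zpow_add₀ (by norm_num : (-1 : ℂ) ≠ 0), ← two_mul, zpow_mul]
    norm_num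
  have h5 : ∀ (c : ℂ) (r : ℝ), c = ↑r + (n : ℂ) * (π * Complex.I) →
      Complex.exp c = ↑(Real.exp r) * w := by
    intro c r hc
    rw [hc, Complex.exp_add, hexpn, Complex.ofReal_exp]
  have h4 : ∀ (c : ℂ) (r : ℝ), c + (n : ℂ) * (π * Complex.I) = ↑r →
      Complex.exp c = ↑(Real.exp r) * w := by
    intro c r hc
    have : Complex.exp c * w = ↑(Real.exp r) := by
      rw [← hexpn, ← Complex.exp_add, hc, Complex.ofReal_exp]
    rw [← this, mul_assoc, hw2, mul_one]
  rw [h4 (u * ↑π) (a * π) (by rw [hudef]; push_cast; ring),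
    h5 (u * -↑π) (-(a * π)) (by rw [hudef]; push_cast; ring),
    h4 (-v * ↑π) (-(a * π)) (by rw [hvdef]; push_cast; ring),
    h5 (-v * -↑π) (a * π) (by rw [hvdef]; push_cast; ring)]
  have huv : ((a : ℂ) ^ 2 + (n : ℂ) ^ 2) = u * v := by
    rw [hudef, hvdef]; ring_nf; rw [Complex.I_sq]; ring
  have hsum : (2 * (a : ℂ)) = u + v := by rw [hudef, hvdef]; ring
  rw [Real.sinh_eq]
  push_cast
  rw [huv, hsum]
  clear_value u v
  field_simp [hu, hv]
  ring

lemma sumNat (a C : ℝ) (ha : 0 < a) (hC : 0 ≤ C) :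
    Summable (fun k : ℕ => C / (a ^ 2 + (k : ℝ) ^ 2)) := by
  rw [← summable_nat_add_iff 1]
  have base : Summable (fun k : ℕ => |C| * (1 / ((k : ℝ) + 1) ^ 2)) := by
    apply Summable.mul_left
    have := (Real.summable_one_div_nat_pow (p := 2)).2 (by norm_num)
    rw [← summable_nat_add_iff 1] at this
    convert this using 2 with k
    push_cast
    rfl
    push_cast
    ring
  apply Summable.of_nonneg_of_le (fun k => ?_) (fun k => ?_) base
  · positivity
  · rw [mul_one_div]
    push_cast
    apply div_le_div₀ (abs_nonneg C) (le_abs_self C) (by positivity)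
    nlinarith [sq_nonneg a]

lemma hasSum_cosh (a : ℝ) (ha : 0 < a) :
    HasSum (fun k : ℕ => 2 * a * Real.sinh (a * π) / (π * (a ^ 2 + (k : ℝ) ^ 2)))
      (Real.cosh (a * π) + Real.sinh (a * π) / (a * π)) := by
  haveI : Fact (0 < 2 * π) := ⟨by positivity⟩
  set f : ℝ → ℂ := fun x => Complex.cosh (a * x) with hfdef
  have hper : f (-π) = f (-π + 2 * π) := by
    simp only [hfdef]
    rw [show (-π + 2 * π : ℝ) = π by ring]
    push_cast
    rw [mul_neg, Complex.cosh_neg]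
  have hcont : ContinuousOn f (Set.Icc (-π) (-π + 2 * π)) :=
    Continuous.continuousOn (by fun_prop)
  set g : C(AddCircle (2 * π), ℂ) :=
    ⟨AddCircle.liftIco (2 * π) (-π) f, AddCircle.liftIco_continuous hper hcont⟩ with hgdef
  set R : ℤ → ℝ := fun n => a * Real.sinh (a * π) / (π * (a ^ 2 + (n : ℝ) ^ 2)) with hRdef
  have hcoeff : ∀ n : ℤ, fourierCoeff (⇑g) n = (-1) ^ n * ((R n : ℝ) : ℂ) := by
    intro n
    rw [hgdef]
    show fourierCoeff (AddCircle.liftIco (2 * π) (-π) f) n = _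
    rw [fourierCoeff_liftIco_eq, fourierCoeffOn_eq_integral]
    have hint : ∀ x : ℝ, (fourier (-n) (x : AddCircle ((-π + 2 * π) - (-π))) : ℂ) • f x
        = Complex.exp (-(n : ℂ) * x * Complex.I) * Complex.cosh (a * x) := by
      intro x
      rw [fourier_coe_apply, smul_eq_mul, hfdef]
      congr 2
      have h2 : ((-π + 2 * π) - (-π) : ℝ) = 2 * π := by ring
      rw [h2]
      have hπ : ((2 * π : ℝ) : ℂ) ≠ 0 := by
        simpa using Real.pi_ne_zero
      push_cast
      field_simp [Complex.ofReal_ne_zero.mpr Real.pi_ne_zero]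
    rw [intervalIntegral.integral_congr (fun x _ => hint x)]
    rw [show (-π + 2 * π : ℝ) = π by ring]
    rw [coshInt a ha n]
    rw [show (π - -π : ℝ) = 2 * π by ring]
    rw [Complex.real_smul, hRdef]
    push_cast
    have h1 : ((π : ℝ) : ℂ) ≠ 0 := by simpa using Real.pi_ne_zero
    have h2 : ((a : ℂ) ^ 2 + (n : ℂ) ^ 2) ≠ 0 := by
      have : (0 : ℝ) < a ^ 2 + (n : ℝ) ^ 2 := by positivity
      intro hcon
      rw [show ((a : ℂ) ^ 2 + (n : ℂ) ^ 2) = ((a ^ 2 + (n : ℝ) ^ 2 : ℝ) : ℂ) by push_cast; ring]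
        at hcon
      exact this.ne' (by exact_mod_cast hcon)
    field_simp
  have hsummable : Summable (fourierCoeff (⇑g)) := by
    apply Summable.of_norm
    have heq : ∀ n : ℤ, ‖fourierCoeff (⇑g) n‖ = |R n| := by
      intro n
      rw [hcoeff n, norm_mul, Complex.norm_real]
      simp
    rw [show (fun n => ‖fourierCoeff (⇑g) n‖) = fun n => |R n| from funext heq]
    have hRabs : ∀ n : ℤ, |R n| = (a * Real.sinh (a * π) / π) / (a ^ 2 + (n : ℝ) ^ 2) := by
      intro n
      rw [abs_of_nonneg]
      · rw [hRdef]; field_simp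
      · rw [hRdef]
        have := Real.sinh_pos_iff.mpr (by positivity : (0:ℝ) < a * π)
        positivity
    rw [show (fun n : ℤ => |R n|) = fun n : ℤ =>
      (a * Real.sinh (a * π) / π) / (a ^ 2 + (n : ℝ) ^ 2) from funext hRabs]
    have hC : 0 ≤ a * Real.sinh (a * π) / π := by
      have := Real.sinh_pos_iff.mpr (by positivity : (0:ℝ) < a * π)
      positivity
    apply Summable.of_nat_of_neg
    · exact_mod_cast sumNat a _ ha hC
    · have := sumNat a (a * Real.sinh (a * π) / π) ha hC
      apply this.congr
      intro k
      push_cast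
      ring_nf
  -- evaluate at π
  have hπmem : (-π : ℝ) ∈ Set.Ico (-π) (-π + 2 * π) := ⟨le_refl _, by linarith [Real.pi_pos]⟩
  have hπeq : ((π : ℝ) : AddCircle (2 * π)) = ((-π : ℝ) : AddCircle (2 * π)) := by
    have h := AddCircle.coe_add_period (2 * π) (-π)
    rw [show (-π + 2 * π : ℝ) = π by ring] at h
    exact h
  have hgval : g ((π : ℝ) : AddCircle (2 * π)) = ((Real.cosh (a * π) : ℝ) : ℂ) := by
    rw [hπeq, hgdef]
    show AddCircle.liftIco (2 * π) (-π) f _ = _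
    rw [AddCircle.liftIco_coe_apply hπmem, hfdef]
    push_cast
    rw [mul_neg, Complex.cosh_neg]
  have hfour : ∀ i : ℤ, (fourier i ((π : ℝ) : AddCircle (2 * π)) : ℂ) = (-1) ^ i := by
    intro i
    rw [fourier_coe_apply]
    rw [show 2 * (π : ℂ) * Complex.I * i * π / (2 * π : ℝ)
        = (i : ℂ) * (π * Complex.I) by
      have hπ : ((π : ℝ) : ℂ) ≠ 0 := by simpa using Real.pi_ne_zero
      push_cast
      field_simp]
    rw [Complex.exp_int_mul, Complex.exp_pi_mul_I]
  have hsum := has_pointwise_sum_fourier_series_of_summable hsummable ((π : ℝ) : AddCircle (2 * π))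
  rw [hgval] at hsum
  have hterm : ∀ i : ℤ, fourierCoeff (⇑g) i • (fourier i ((π : ℝ) : AddCircle (2 * π)) : ℂ)
      = ((R i : ℝ) : ℂ) := by
    intro i
    rw [smul_eq_mul, hcoeff i, hfour i]
    have hw2 : ((-1 : ℂ) ^ i) * ((-1 : ℂ) ^ i) = 1 := by
      rw [← zpow_add₀ (by norm_num : (-1 : ℂ) ≠ 0), ← two_mul, zpow_mul]
      norm_num
    calc (-1 : ℂ) ^ i * ((R i : ℝ) : ℂ) * (-1 : ℂ) ^ i
        = ((-1 : ℂ) ^ i * (-1 : ℂ) ^ i) * ((R i : ℝ) : ℂ) := by ring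
      _ = ((R i : ℝ) : ℂ) := by rw [hw2, one_mul]
  rw [show (fun i : ℤ => fourierCoeff (⇑g) i • (fourier i ((π : ℝ) : AddCircle (2 * π)) : ℂ))
      = fun i : ℤ => ((R i : ℝ) : ℂ) from funext hterm] at hsum
  have hsumR : HasSum R (Real.cosh (a * π)) := Complex.hasSum_ofReal.mp hsum
  have hnat := hsumR.nat_add_neg
  have hR0 : R 0 = Real.sinh (a * π) / (a * π) := by
    rw [hRdef]
    simp only [Int.cast_zero]
    rw [show (0 : ℝ) ^ 2 = 0 by norm_num]
    field_simp
    ring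
  rw [hR0] at hnat
  rw [show (fun k : ℕ => R (k : ℤ) + R (-(k : ℤ)))
      = (fun k : ℕ => 2 * a * Real.sinh (a * π) / (π * (a ^ 2 + (k : ℝ) ^ 2))) from
    funext fun k => by rw [hRdef]; push_cast; ring] at hnat
  exact hnat

/-- `Σ_{k≥1} |h_k| = cosh(π σ^{-1/2})` for the particular sequence `h`. -/
theorem h_norm (σ : ℕ) (hσ : 0 < σ) (h : ℕ → ℝ)
    (h1 : h 1 = Real.sinh (π / Real.sqrt σ) / (π / Real.sqrt σ))
    (hmain : ∀ n : ℕ, 1 ≤ n →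
      h (σ * n ^ 2 + 1) =
        2 * (Real.sinh (π / Real.sqrt σ) / (π / Real.sqrt σ)) * (-1) ^ n /
          (σ * n ^ 2 + 1))
    (hzero : ∀ k : ℕ, k ≠ 1 → (∀ n : ℕ, 1 ≤ n → k ≠ σ * n ^ 2 + 1) → h k = 0) :
    ∑' k : ℕ, |h (k + 1)| = Real.cosh (π / Real.sqrt σ) := by
  have hσR : (0 : ℝ) < σ := by exact_mod_cast hσ
  have hsq : (0 : ℝ) < Real.sqrt σ := Real.sqrt_pos.mpr hσR
  set a : ℝ := (Real.sqrt σ)⁻¹ with hadef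
  have ha : 0 < a := inv_pos.mpr hsq
  have haσ : a ^ 2 * σ = 1 := by
    rw [hadef, inv_pow, Real.sq_sqrt hσR.le]
    field_simp
  have hx : π / Real.sqrt σ = a * π := by
    rw [hadef, div_eq_mul_inv, mul_comm]
  set c : ℝ := Real.sinh (a * π) / (a * π) with hcdef
  have hsinh : 0 < Real.sinh (a * π) := Real.sinh_pos_iff.mpr (by positivity)
  have hcpos : 0 < c := by rw [hcdef]; positivity
  set F : ℕ → ℝ := fun k => 2 * a * Real.sinh (a * π) / (π * (a ^ 2 + (k : ℝ) ^ 2)) with hFdef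
  have hFc : ∀ n : ℕ, F n = 2 * c / ((σ : ℝ) * (n : ℝ) ^ 2 + 1) := by
    intro n
    rw [hFdef, hcdef]
    have hd1 : (σ : ℝ) * (n : ℝ) ^ 2 + 1 > 0 := by positivity
    have hd2 : a ^ 2 + (n : ℝ) ^ 2 > 0 := by positivity
    field_simp
    linear_combination ((n : ℝ) ^ 2) * haσ
  have key := hasSum_cosh a ha
  rw [← hFdef, ← hcdef] at key
  -- the shifted sum
  have hmain' : HasSum (fun n : ℕ => |h (σ * n ^ 2 + 1)|) (Real.cosh (a * π)) := by
    have hsub := key.sub (hasSum_ite_eq (0 : ℕ) c)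
    rw [add_sub_cancel_right] at hsub
    have hfun : (fun n : ℕ => |h (σ * n ^ 2 + 1)|)
        = fun n : ℕ => F n - (if n = 0 then c else 0) := by
      funext n
      cases n with
      | zero =>
        simp only [if_pos rfl]
        rw [show σ * 0 ^ 2 + 1 = 1 by ring, h1, hx, ← hcdef, abs_of_pos hcpos, hFc 0]
        push_cast
        ring
      | succ m =>
        rw [if_neg (Nat.succ_ne_zero m), sub_zero,
          hmain (m + 1) (Nat.succ_le_succ (Nat.zero_le m)), hx, ← hcdef, hFc (m + 1)]
        have hd : (0 : ℝ) < (σ : ℝ) * ((m + 1 : ℕ) : ℝ) ^ 2 + 1 := by positivity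
        rw [abs_div, abs_of_pos hd, abs_mul, abs_pow, abs_neg, abs_one, one_pow, mul_one,
          abs_of_pos (by positivity : (0 : ℝ) < 2 * c)]
    rw [hfun]
    exact hsub
  have hinj : Function.Injective (fun n : ℕ => σ * n ^ 2) := by
    intro m n hmn
    simp only at hmn
    have h2 := Nat.eq_of_mul_eq_mul_left hσ hmn
    exact Nat.pow_left_injective (by norm_num) h2
  have hvanish : ∀ k ∉ Set.range (fun n : ℕ => σ * n ^ 2), |h (k + 1)| = 0 := by
    intro k hk
    rw [hzero (k + 1) ?_ ?_, abs_zero]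
    · intro hk1
      refine hk ⟨0, ?_⟩
      show σ * 0 ^ 2 = k
      simp only [pow_two, Nat.mul_zero, Nat.zero_mul]
      omega
    · intro n hn hkn
      refine hk ⟨n, ?_⟩
      show σ * n ^ 2 = k
      omega
  have := (hinj.hasSum_iff hvanish).mp hmain'
  rw [hx]
  exact this.tsum_eq
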